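/- The set X(2,2,2,2) of arc diagrams with n = 3 labeled finite points and the point z_∞, all of valence 2, contains exactly 18 elements: there are exactly 3 such diagrams up to relabeling of the finite points z_1, z_2, z_3, and each gives rise to 6 labeled diagrams. -/
import Mathlib


namespace CactusPaper

/-- The indexing set of the generators `s_{p,q}`, `1 ≤ p < q ≤ n`, of the cactus group. -/
abbrev GenIdx (n : ℕ) : Type := {pq : ℕ × ℕ // 1 ≤ pq.1 ∧ pq.1 < pq.2 ∧ pq.2 ≤ n}

/-- The defining relations of the cactus group `J_n`:
`s_{p,q}² = e`;  `s_{p,q} s_{p',q'} = s_{p',q'} s_{p,q}` whenever the intervals `[p,q]` and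
`[p',q']` are disjoint;  `s_{p,q} s_{p',q'} s_{p,q} = s_{p+q-q', p+q-p'}` whenever
`p ≤ p' < q' ≤ q`. -/
def cactusRels (n : ℕ) : Set (FreeGroup (GenIdx n)) :=
  {w | (∃ s : GenIdx n, w = FreeGroup.of s * FreeGroup.of s) ∨
    (∃ s t : GenIdx n, (s.1.2 < t.1.1 ∨ t.1.2 < s.1.1) ∧
      w = FreeGroup.of s * FreeGroup.of t * (FreeGroup.of s)⁻¹ * (FreeGroup.of t)⁻¹) ∨
    (∃ s t u : GenIdx n, s.1.1 ≤ t.1.1 ∧ t.1.2 ≤ s.1.2 ∧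
      u.1.1 = s.1.1 + s.1.2 - t.1.2 ∧ u.1.2 = s.1.1 + s.1.2 - t.1.1 ∧
      w = FreeGroup.of s * FreeGroup.of t * FreeGroup.of s * (FreeGroup.of u)⁻¹)}

/-- The cactus group `J_n`, presented by the generators `s_{p,q}` and the cactus relations. -/
abbrev CactusGroup (n : ℕ) : Type := PresentedGroup (cactusRels n)

/-- The generator `s_{p,q}` of the cactus group `J_n`. -/
def gen (n : ℕ) (s : GenIdx n) : CactusGroup n := PresentedGroup.of s

/-- The generator `s_{p,q}` of `J_n`, with the constraints on `p, q` given separately. -/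
def genPQ (n p q : ℕ) (h1 : 1 ≤ p) (h2 : p < q) (h3 : q ≤ n) : CactusGroup n :=
  gen n ⟨(p, q), h1, h2, h3⟩

/-- Raw data of an arc diagram on the disc with `n+1` marked boundary points:
position `0` carries `z_∞` and positions `1, …, n` carry the finite points, in clockwise
order starting from `z_∞`;  `lbl k` is the index `i` of the label `z_i` sitting at
position `k`, and `mult i j` is the number of (parallel, non-crossing) arcs joining the
marked points at positions `i` and `j`.  (An isotopy class of a system of non-crossing
arcs is faithfully recorded by these multiplicities.) -/
structure PreDiagram (n : ℕ) where
  lbl : ℕ → ℕ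
  mult : ℕ → ℕ → ℕ

/-- The valence (total number of arc ends) at position `k`. -/
def valence {n : ℕ} (D : PreDiagram n) (k : ℕ) : ℕ :=
  ∑ j ∈ Finset.range (n + 1), D.mult k j

/-- `D` is an arc diagram in `X(l 1, …, l n, linf)`: the labels of positions `1, …, n` are
a bijection of `{1, …, n}` (normalized to `0` elsewhere), the multiplicity matrix is
symmetric, loopless and supported on positions `≤ n`, the arcs are pairwise non-crossing,
the point `z_∞` has valence `linf`, and the point `z_i` has valence `l i`. -/
def IsDiagram {n : ℕ} (l : ℕ → ℕ) (linf : ℕ) (D : PreDiagram n) : Prop :=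
  Set.BijOn D.lbl (Set.Icc 1 n) (Set.Icc 1 n) ∧
  (∀ k, k ∉ Set.Icc 1 n → D.lbl k = 0) ∧
  (∀ i j, D.mult i j = D.mult j i) ∧
  (∀ i, D.mult i i = 0) ∧
  (∀ i j, n < i ∨ n < j → D.mult i j = 0) ∧
  (∀ a b c d, a < b → b < c → c < d → d ≤ n → D.mult a c = 0 ∨ D.mult b d = 0) ∧
  valence D 0 = linf ∧
  (∀ k, 1 ≤ k → k ≤ n → valence D k = l (D.lbl k))

/-- The set `X(l 1, …, l n, linf)` of arc diagrams. -/
abbrev ADiagram (n : ℕ) (l : ℕ → ℕ) (linf : ℕ) : Type :=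
  {D : PreDiagram n // IsDiagram l linf D}

/-- The involution of positions reversing the interval `[p,q]`. -/
def sigmaRev (p q k : ℕ) : ℕ := if p ≤ k ∧ k ≤ q then p + q - k else k

/-- The number of arcs at position `a` crossing the shear line of `s_{p,q}`, i.e. joining
`a` to a position outside `[p,q]`. -/
def crossDeg {n : ℕ} (D : PreDiagram n) (p q a : ℕ) : ℕ :=
  ∑ j ∈ (Finset.range (n + 1)).filter (fun j => j < p ∨ q < j), D.mult a j

/-- Cumulative count, along the shear line of `s_{p,q}`, of the crossing arcs of the *new*
(reversed) diagram emanating from positions `p, …, a` of the active region (the point at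
position `b` of the new diagram is the point at position `p+q-b` of the old one). -/
def inCum {n : ℕ} (D : PreDiagram n) (p q a : ℕ) : ℕ :=
  ∑ b ∈ Finset.Icc p a, crossDeg D p q (p + q - b)

/-- The positions outside `[p,q]` in their order along the shear line, starting from the
end of the shear line lying between positions `p-1` and `p`:
`p-1, p-2, …, 1, 0, n, n-1, …, q+1`. -/
def outRank (n p j : ℕ) : ℕ := if j < p then p - 1 - j else p + (n - j)

/-- Cumulative count, along the shear line, of the crossing arc ends outside the active
region, up to (and including) those attached at position `j`. -/
def outCum {n : ℕ} (D : PreDiagram n) (p q j : ℕ) : ℕ :=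
  ∑ j' ∈ (Finset.range (n + 1)).filter
      (fun j' => (j' < p ∨ q < j') ∧ outRank n p j' ≤ outRank n p j),
    crossDeg D p q j'

/-- The number of arcs of the new diagram joining a position `a ∈ [p,q]` to a position
`j ∉ [p,q]`: the cut arcs are reconnected matching up, in order, the crossing arc ends on
the two sides of the shear line (this being the unique non-crossing reconnection), so this
number is the overlap of the interval of shear-line indices belonging to `a` with the one
belonging to `j`. -/
def crossMult {n : ℕ} (D : PreDiagram n) (p q a j : ℕ) : ℕ :=
  min (inCum D p q a) (outCum D p q j) -
    max (inCum D p q a - crossDeg D p q (p + q - a)) (outCum D p q j - crossDeg D p q j)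

/-- The action of the generator `s_{p,q}` on arc-diagram data: the marked points at the
positions in `[p,q]` are reversed (together with their labels), the arcs inside the active
region are reflected along with them, the arcs outside are kept, and the arcs crossing the
shear line are reconnected in the unique non-crossing fashion. -/
def genAct {n : ℕ} (p q : ℕ) (D : PreDiagram n) : PreDiagram n where
  lbl := fun k => D.lbl (sigmaRev p q k)
  mult := fun i j =>
    if n < i ∨ n < j then 0
    else if (p ≤ i ∧ i ≤ q) ∧ (p ≤ j ∧ j ≤ q) then D.mult (sigmaRev p q i) (sigmaRev p q j)
    else if p ≤ i ∧ i ≤ q then crossMult D p q i j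
    else if p ≤ j ∧ j ≤ q then crossMult D p q j i
    else D.mult i j

/-- `A` is *the* action of the cactus group `J_n` on `X(l 1, …, l n, linf)`: a group
homomorphism `J_n →* Perm(X)` sending each generator `s_{p,q}` to the
reversal-and-reconnection operation `genAct p q`. -/
def IsCactusAction {n : ℕ} (l : ℕ → ℕ) (linf : ℕ)
    (A : CactusGroup n →* Equiv.Perm (ADiagram n l linf)) : Prop :=
  ∀ (s : GenIdx n) (x : ADiagram n l linf),
    ((A (gen n s)) x).1 = genAct s.1.1 s.1.2 x.1

/-- The border thickness of an arc diagram: the minimal number of arcs joining a pair of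
adjacent marked points (positions `k` and `k+1 mod (n+1)`). -/
noncomputable def borderThickness {n : ℕ} (D : PreDiagram n) : ℕ :=
  sInf {m : ℕ | ∃ k ≤ n, m = D.mult k ((k + 1) % (n + 1))}

/-- The greatest common divisor of all the arc multiplicities of the diagram. -/
def multGcd {n : ℕ} (D : PreDiagram n) : ℕ :=
  Finset.gcd (Finset.range (n + 1) ×ˢ Finset.range (n + 1)) (fun ij => D.mult ij.1 ij.2)

/-- Clockwise cyclic distance from position `k` to position `j` among the `n+1`
boundary positions. -/
def cdist (n k j : ℕ) : ℕ := (j + (n + 1) - k) % (n + 1)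

/-- The number of arc ends at `k` lying strictly clockwise of the bundle of parallel arcs
joining `k` to `j` (the arcs from `k` to clockwise-nearer targets attach to `k` on the
clockwise side). -/
def cumBefore {n : ℕ} (D : PreDiagram n) (k j : ℕ) : ℕ :=
  ∑ j' ∈ (Finset.range (n + 1)).filter (fun j' => cdist n k j' < cdist n k j), D.mult k j'

/-- Arc ends: at position `k` the `valence D k` arc ends are numbered `0, 1, …` in
clockwise order.  `ArcRel D (k, t) (j, s)` holds exactly when some arc of the diagram has
its two ends at `(k, t)` and `(j, s)`: the `r`-th parallel arc (counted from the outermost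
one) of the bundle joining `k` and `j` attaches at its two endpoints in opposite relative
orders. -/
def ArcRel {n : ℕ} (D : PreDiagram n) (e f : ℕ × ℕ) : Prop :=
  ∃ r < D.mult e.1 f.1,
    e.2 = valence D e.1 - cumBefore D e.1 f.1 - 1 - r ∧
    f.2 = valence D f.1 - cumBefore D f.1 e.1 - D.mult e.1 f.1 + r

/-- The right-hand-rule pairing: at each marked point the consecutive arc ends `2r` and
`2r + 1` (in clockwise order) are joined within one loop of the decomposition. -/
def RhrRel {n : ℕ} (D : PreDiagram n) (e f : ℕ × ℕ) : Prop :=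
  e.1 = f.1 ∧ ∃ r, e.2 = 2 * r ∧ f.2 = 2 * r + 1

/-- The arc ends of an arc diagram. -/
abbrev Endpoint {n : ℕ} (D : PreDiagram n) : Type :=
  {e : ℕ × ℕ // e.1 ≤ n ∧ e.2 < valence D e.1}

/-- The number of components of an arc diagram all of whose valences are even: the number
of closed non-overlapping loops into which the arcs decompose under the right-hand rule.
Formally, it is the number of equivalence classes of arc ends under the equivalence
relation generated by "being the two ends of one arc" (`ArcRel`) together with the
right-hand-rule pairing at each marked point (`RhrRel`). -/
noncomputable def numComponents {n : ℕ} (D : PreDiagram n) : ℕ :=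
  Nat.card (Quot (fun e f : Endpoint D => ArcRel D e.1 f.1 ∨ RhrRel D e.1 f.1))

/-! ### Auxiliary material for Statement 19 -/

/-- The three possible multiplicity matrices, parametrized by `a = m 0 1`. -/
def Mmat (a : ℕ) : ℕ → ℕ → ℕ := fun i j =>
  if (i = 0 ∧ j = 1) ∨ (i = 1 ∧ j = 0) ∨ (i = 2 ∧ j = 3) ∨ (i = 3 ∧ j = 2) then a
  else if (i = 0 ∧ j = 3) ∨ (i = 3 ∧ j = 0) ∨ (i = 1 ∧ j = 2) ∨ (i = 2 ∧ j = 1) then 2 - a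
  else 0

/-- The valence of an abstract multiplicity matrix (for `n = 3`). -/
def mval (m : ℕ → ℕ → ℕ) (k : ℕ) : ℕ := m k 0 + m k 1 + m k 2 + m k 3

/-- The conditions of `IsDiagram` involving only the multiplicity matrix (for `n = 3`,
all valences `2`). -/
def MultOk (m : ℕ → ℕ → ℕ) : Prop :=
  (∀ i j, m i j = m j i) ∧ (∀ i, m i i = 0) ∧
  (∀ i j, 3 < i ∨ 3 < j → m i j = 0) ∧
  (∀ a b c d, a < b → b < c → c < d → d ≤ 3 → m a c = 0 ∨ m b d = 0) ∧
  (∀ k, k ≤ 3 → mval m k = 2)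

/-- The conditions of `IsDiagram` involving only the labels (for `n = 3`). -/
def LblOk (f : ℕ → ℕ) : Prop :=
  Set.BijOn f (Set.Icc 1 3) (Set.Icc 1 3) ∧ ∀ k, k ∉ Set.Icc 1 3 → f k = 0

lemma valence_eq_mval (D : PreDiagram 3) (k : ℕ) : valence D k = mval D.mult k := by
  simp [valence, mval, Finset.sum_range_succ]

lemma isDiagram_iff (D : PreDiagram 3) :
    IsDiagram (fun _ => 2) 2 D ↔ LblOk D.lbl ∧ MultOk D.mult := by
  constructor
  · rintro ⟨h1, h2, h3, h4, h5, h6, h7, h8⟩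
    refine ⟨⟨h1, h2⟩, h3, h4, h5, h6, ?_⟩
    intro k hk
    rcases Nat.eq_zero_or_pos k with rfl | hk1
    · rw [← valence_eq_mval]; exact h7
    · rw [← valence_eq_mval]; exact h8 k hk1 hk
  · rintro ⟨⟨h1, h2⟩, h3, h4, h5, h6, h7⟩
    exact ⟨h1, h2, h3, h4, h5, h6, by rw [valence_eq_mval]; exact h7 0 (by norm_num),
      fun k hk1 hk2 => by rw [valence_eq_mval]; exact h7 k hk2⟩

lemma multok_eq {m : ℕ → ℕ → ℕ} (h : MultOk m) : m 0 1 ≤ 2 ∧ m = Mmat (m 0 1) := by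
  obtain ⟨hs, hd, hsup, hc, hv⟩ := h
  have e0 := hv 0 (by norm_num)
  have e1 := hv 1 (by norm_num)
  have e2 := hv 2 (by norm_num)
  have e3 := hv 3 (by norm_num)
  simp only [mval] at e0 e1 e2 e3
  have h10 := hs 1 0; have h20 := hs 2 0; have h30 := hs 3 0
  have h21 := hs 2 1; have h31 := hs 3 1; have h32 := hs 3 2
  have d0 := hd 0; have d1 := hd 1; have d2 := hd 2; have d3 := hd 3
  have hcr := hc 0 1 2 3 (by norm_num) (by norm_num) (by norm_num) (by norm_num)
  have key : m 0 2 = 0 ∧ m 1 3 = 0 ∧ m 0 3 = 2 - m 0 1 ∧ m 1 2 = 2 - m 0 1 ∧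
      m 2 3 = m 0 1 ∧ m 0 1 ≤ 2 := by omega
  refine ⟨key.2.2.2.2.2, ?_⟩
  funext i j
  by_cases hi : 3 < i
  · rw [hsup i j (Or.inl hi)]; simp only [Mmat]; split_ifs <;> omega
  · by_cases hj : 3 < j
    · rw [hsup i j (Or.inr hj)]; simp only [Mmat]; split_ifs <;> omega
    · push_neg at hi hj
      interval_cases i <;> interval_cases j <;> norm_num [Mmat] <;> omega

lemma multok_Mmat {a : ℕ} (ha : a ≤ 2) : MultOk (Mmat a) := by
  refine ⟨?_, ?_, ?_, ?_, ?_⟩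
  · intro i j; simp only [Mmat]; split_ifs <;> omega
  · intro i; simp only [Mmat]; split_ifs <;> omega
  · intro i j h; simp only [Mmat]; split_ifs <;> omega
  · intro b c d e h1 h2 h3 h4
    left; simp only [Mmat]; split_ifs <;> omega
  · intro k hk
    interval_cases k <;> norm_num [mval, Mmat] <;> omega

lemma Mmat_01 (a : ℕ) : Mmat a 0 1 = a := by simp [Mmat]

lemma lbl_mem (f : ℕ → ℕ) (h : LblOk f) (i : Fin 3) : f ((i : ℕ) + 1) ∈ Set.Icc 1 3 :=
  h.1.mapsTo (Set.mem_Icc.mpr ⟨by omega, by have := i.isLt; omega⟩)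

/-- The permutation of `Fin 3` corresponding to a valid labelling. -/
noncomputable def lblToFun (f : ℕ → ℕ) (h : LblOk f) : Fin 3 → Fin 3 :=
  fun i => ⟨f ((i : ℕ) + 1) - 1, by
    have h1 := lbl_mem f h i; rw [Set.mem_Icc] at h1; omega⟩

lemma lblToFun_inj (f : ℕ → ℕ) (h : LblOk f) : Function.Injective (lblToFun f h) := by
  intro i j hij
  have hi := lbl_mem f h i; have hj := lbl_mem f h j
  rw [Set.mem_Icc] at hi hj
  simp only [lblToFun, Fin.mk.injEq] at hij
  have hf : f ((i : ℕ) + 1) = f ((j : ℕ) + 1) := by omega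
  have := h.1.injOn
    (Set.mem_Icc.mpr ⟨by omega, by have := i.isLt; omega⟩ :
      (i : ℕ) + 1 ∈ Set.Icc 1 3)
    (Set.mem_Icc.mpr ⟨by omega, by have := j.isLt; omega⟩ :
      (j : ℕ) + 1 ∈ Set.Icc 1 3) hf
  exact Fin.ext (by omega)

/-- The labelling corresponding to a permutation of `Fin 3`. -/
def funToLbl (v : Fin 3 → Fin 3) : ℕ → ℕ :=
  fun k => if h : 1 ≤ k ∧ k ≤ 3 then (v ⟨k - 1, by omega⟩ : ℕ) + 1 else 0

lemma lblOk_funToLbl (v : Fin 3 → Fin 3) (hv : Function.Injective v) :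
    LblOk (funToLbl v) := by
  constructor
  · refine ⟨?_, ?_, ?_⟩
    · intro k hk
      rw [Set.mem_Icc] at hk ⊢
      simp only [funToLbl, dif_pos hk]
      have := (v ⟨k - 1, by omega⟩).isLt
      omega
    · intro k hk k' hk' hkk
      rw [Set.mem_Icc] at hk hk'
      simp only [funToLbl, dif_pos hk, dif_pos hk'] at hkk
      have harg : v ⟨k - 1, by omega⟩ = v ⟨k' - 1, by omega⟩ := Fin.ext (by omega)
      have := hv harg
      rw [Fin.mk.injEq] at this
      omega
    · intro y hy
      rw [Set.mem_Icc] at hy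
      obtain ⟨x, hx⟩ := (Finite.injective_iff_surjective.mp hv) ⟨y - 1, by omega⟩
      refine ⟨(x : ℕ) + 1, Set.mem_Icc.mpr ⟨by omega, by have := x.isLt; omega⟩, ?_⟩
      have hmem : 1 ≤ (x : ℕ) + 1 ∧ (x : ℕ) + 1 ≤ 3 := ⟨by omega, by have := x.isLt; omega⟩
      simp only [funToLbl, dif_pos hmem]
      have harg : (⟨(x : ℕ) + 1 - 1, by omega⟩ : Fin 3) = x :=
        Fin.ext (by show (x : ℕ) + 1 - 1 = (x : ℕ); omega)
      rw [harg, hx]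
      show y - 1 + 1 = y
      omega
  · intro k hk
    rw [Set.mem_Icc] at hk
    simp only [funToLbl, dif_neg hk]

lemma funToLbl_lblToFun (f : ℕ → ℕ) (h : LblOk f) : funToLbl (lblToFun f h) = f := by
  funext k
  by_cases hk : 1 ≤ k ∧ k ≤ 3
  · simp only [funToLbl, dif_pos hk, lblToFun]
    have h1 := lbl_mem f h ⟨k - 1, by omega⟩
    rw [Set.mem_Icc] at h1
    have hk1 : k - 1 + 1 = k := by omega
    rw [hk1] at h1 ⊢
    omega
  · simp only [funToLbl, dif_neg hk]
    exact (h.2 k (by rw [Set.mem_Icc]; exact hk)).symm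

lemma lblToFun_funToLbl (v : Fin 3 → Fin 3) (h : LblOk (funToLbl v)) :
    lblToFun (funToLbl v) h = v := by
  funext i
  apply Fin.ext
  have hmem : 1 ≤ (i : ℕ) + 1 ∧ (i : ℕ) + 1 ≤ 3 := ⟨by omega, by have := i.isLt; omega⟩
  simp only [lblToFun, funToLbl, dif_pos hmem]
  have harg : (⟨(i : ℕ) + 1 - 1, by omega⟩ : Fin 3) = i :=
    Fin.ext (by show (i : ℕ) + 1 - 1 = (i : ℕ); omega)
  rw [harg]
  omega

lemma exists_diagram_iff (m : ℕ → ℕ → ℕ) :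
    (∃ D : PreDiagram 3, IsDiagram (fun _ => 2) 2 D ∧ D.mult = m) ↔ MultOk m := by
  constructor
  · rintro ⟨D, hD, rfl⟩; exact ((isDiagram_iff D).mp hD).2
  · intro hm
    exact ⟨⟨funToLbl id, m⟩, (isDiagram_iff _).mpr
      ⟨lblOk_funToLbl id Function.injective_id, hm⟩, rfl⟩

lemma card_inj_fin3 : Nat.card {v : Fin 3 → Fin 3 // Function.Injective v} = 6 := by
  rw [Nat.card_eq_fintype_card]; decide

/-- The set `X(2, 2, 2, 2)` of arc diagrams with `n = 3` labeled finite
points and the point `z_∞`, all of valence `2`, contains exactly `18` elements: there are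
exactly `3` such diagrams up to relabeling of the finite points `z_1, z_2, z_3` (i.e. `3`
possible underlying unlabeled arc systems), and each gives rise to `6` labeled
diagrams. -/
theorem statement_19 :
    Nat.card (ADiagram 3 (fun _ => 2) 2) = 18 ∧
    Nat.card {m : ℕ → ℕ → ℕ //
        ∃ D : PreDiagram 3, IsDiagram (fun _ => 2) 2 D ∧ D.mult = m} = 3 ∧
    ∀ m : ℕ → ℕ → ℕ, (∃ D : PreDiagram 3, IsDiagram (fun _ => 2) 2 D ∧ D.mult = m) →
      Nat.card {D : PreDiagram 3 // IsDiagram (fun _ => 2) 2 D ∧ D.mult = m} = 6 := by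
  refine ⟨?_, ?_, ?_⟩
  · have e : ADiagram 3 (fun _ => 2) 2 ≃
        {v : Fin 3 → Fin 3 // Function.Injective v} × Fin 3 :=
      { toFun := fun D =>
          (⟨lblToFun D.1.lbl ((isDiagram_iff D.1).mp D.2).1, lblToFun_inj _ _⟩,
            ⟨D.1.mult 0 1, by
              have := (multok_eq ((isDiagram_iff D.1).mp D.2).2).1; omega⟩)
        invFun := fun p => ⟨⟨funToLbl p.1.1, Mmat p.2⟩, (isDiagram_iff _).mpr
          ⟨lblOk_funToLbl _ p.1.2, multok_Mmat (by have := p.2.isLt; omega)⟩⟩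
        left_inv := fun D => by
          obtain ⟨⟨f, m⟩, hD⟩ := D
          obtain ⟨hl, hm⟩ := (isDiagram_iff _).mp hD
          apply Subtype.ext
          simp only [PreDiagram.mk.injEq]
          exact ⟨funToLbl_lblToFun f hl, (multok_eq hm).2.symm⟩
        right_inv := fun p => by
          obtain ⟨⟨v, hv⟩, a⟩ := p
          refine Prod.ext ?_ ?_
          · exact Subtype.ext (lblToFun_funToLbl v (lblOk_funToLbl v hv))
          · exact Fin.ext (by simpa using Mmat_01 a) }
    rw [Nat.card_congr e, Nat.card_prod, card_inj_fin3, Nat.card_eq_fintype_card,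
      Fintype.card_fin]
  · have e : {m : ℕ → ℕ → ℕ //
        ∃ D : PreDiagram 3, IsDiagram (fun _ => 2) 2 D ∧ D.mult = m} ≃ Fin 3 :=
      { toFun := fun x => ⟨x.1 0 1, by
          have := (multok_eq ((exists_diagram_iff x.1).mp x.2)).1; omega⟩
        invFun := fun a => ⟨Mmat a,
          (exists_diagram_iff _).mpr (multok_Mmat (by have := a.isLt; omega))⟩
        left_inv := fun x =>
          Subtype.ext (multok_eq ((exists_diagram_iff x.1).mp x.2)).2.symm
        right_inv := fun a => Fin.ext (by simpa using Mmat_01 a) }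
    rw [Nat.card_congr e, Nat.card_eq_fintype_card, Fintype.card_fin]
  · intro m hm
    have hmk : MultOk m := (exists_diagram_iff m).mp hm
    have e : {D : PreDiagram 3 // IsDiagram (fun _ => 2) 2 D ∧ D.mult = m} ≃
        {v : Fin 3 → Fin 3 // Function.Injective v} :=
      { toFun := fun x =>
          ⟨lblToFun x.1.lbl ((isDiagram_iff x.1).mp x.2.1).1, lblToFun_inj _ _⟩
        invFun := fun v => ⟨⟨funToLbl v.1, m⟩, (isDiagram_iff _).mpr
          ⟨lblOk_funToLbl _ v.2, hmk⟩, rfl⟩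
        left_inv := fun x => by
          obtain ⟨⟨f, mm⟩, hD, hmm⟩ := x
          obtain ⟨hl, _⟩ := (isDiagram_iff _).mp hD
          apply Subtype.ext
          simp only [PreDiagram.mk.injEq]
          exact ⟨funToLbl_lblToFun f hl, hmm.symm⟩
        right_inv := fun v => Subtype.ext (lblToFun_funToLbl v.1 (lblOk_funToLbl v.1 v.2)) }
    rw [Nat.card_congr e, card_inj_fin3]

end CactusPaper
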